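/- Let n ≥ 1 be odd. Then the evaluation fibration ev₀ : P_a S^n → S^n, ev₀(γ) = γ(0), admits a continuous section: there exists a continuous map s : S^n → P_a S^n with s(p)(0) = p for all p ∈ S^n (for instance s(p)(t) = cos(πt) p + sin(πt) X(p) for a continuous unit tangent vector field X on S^n). -/

import Mathlib

open unitInterval

namespace Stmt12

variable {n : ℕ}

def σf (h : n % 2 = 1) (i : Fin (n+1)) : Fin (n+1) :=
  if hi : i.val % 2 = 0 then ⟨i.val + 1, by have := i.isLt; omega⟩
  else ⟨i.val - 1, by have := i.isLt; omega⟩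

lemma σf_σf (h : n % 2 = 1) (i : Fin (n+1)) : σf h (σf h i) = i := by
  unfold σf
  split <;> rename_i h1
  · split <;> rename_i h2 <;> [skip; exact Fin.ext (by simp)]
    exfalso; simp at h2; omega
  · split <;> rename_i h2
    · exact Fin.ext (by simp at h1 ⊢; omega)
    · exfalso; simp at h1 h2; omega

lemma σf_ne (h : n % 2 = 1) (i : Fin (n+1)) : σf h i ≠ i := by
  unfold σf; split <;> (intro hc; apply_fun Fin.val at hc; simp at hc <;> omega)

noncomputable def sgn (i : Fin (n+1)) : ℝ := if i.val % 2 = 0 then -1 else 1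

lemma sgn_σf (h : n % 2 = 1) (i : Fin (n+1)) : sgn (σf h i) = - sgn i := by
  by_cases hi : i.val % 2 = 0
  · have h2 : ¬ (σf h i).val % 2 = 0 := by simp only [σf]; split <;> simp <;> omega
    simp [sgn, hi, h2]
  · have h2 : (σf h i).val % 2 = 0 := by simp only [σf]; split <;> simp <;> omega
    simp [sgn, hi, h2]

lemma sgn_sq (i : Fin (n+1)) : sgn i * sgn i = 1 := by unfold sgn; split <;> norm_num

noncomputable def J (h : n % 2 = 1) (x : EuclideanSpace ℝ (Fin (n+1))) :
    EuclideanSpace ℝ (Fin (n+1)) := WithLp.toLp 2 (fun i => sgn i * x (σf h i))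

lemma J_cont (h : n % 2 = 1) : Continuous (J h) := by
  apply (PiLp.continuous_toLp 2 _).comp
  apply continuous_pi
  intro i
  exact (continuous_const.mul ((continuous_apply _).comp (PiLp.continuous_ofLp 2 _)))

lemma inner_J (h : n % 2 = 1) (x : EuclideanSpace ℝ (Fin (n+1))) :
    inner ℝ x (J h x) = (0 : ℝ) := by
  rw [PiLp.inner_apply]
  refine Finset.sum_involution (fun i _ => σf h i) ?_ (fun i _ _ => σf_ne h i)
    (fun i _ => Finset.mem_univ _) (fun i _ => σf_σf h i)
  intro i _
  have hs : σf h (σf h i) = i := σf_σf h i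
  simp only [J, RCLike.inner_apply, conj_trivial, sgn_σf h]
  rw [hs]; ring

lemma inner_J_self (h : n % 2 = 1) (x : EuclideanSpace ℝ (Fin (n+1))) :
    inner ℝ (J h x) (J h x) = (inner ℝ x x : ℝ) := by
  simp only [PiLp.inner_apply, RCLike.inner_apply, conj_trivial]
  have e : Function.Involutive (σf h) := σf_σf h
  rw [← Equiv.sum_comp e.toPerm (fun i => x i * x i)]
  apply Finset.sum_congr rfl
  intro i _
  simp only [J, Function.Involutive.coe_toPerm]
  nlinarith [sgn_sq i]

lemma norm_J (h : n % 2 = 1) (x : EuclideanSpace ℝ (Fin (n+1))) : ‖J h x‖ = ‖x‖ := by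
  have h1 := inner_J_self h x
  rw [real_inner_self_eq_norm_sq, real_inner_self_eq_norm_sq] at h1
  nlinarith [norm_nonneg (J h x), norm_nonneg x]


noncomputable def pathFun (h : n % 2 = 1)
    (q : Metric.sphere (0 : EuclideanSpace ℝ (Fin (n+1))) 1 × I) :
    EuclideanSpace ℝ (Fin (n+1)) :=
  Real.cos (Real.pi * q.2) • (q.1 : EuclideanSpace ℝ (Fin (n+1))) +
    Real.sin (Real.pi * q.2) • J h (q.1 : EuclideanSpace ℝ (Fin (n+1)))

lemma pathFun_mem (h : n % 2 = 1) (q) :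
    pathFun h q ∈ Metric.sphere (0 : EuclideanSpace ℝ (Fin (n+1))) 1 := by
  rw [mem_sphere_zero_iff_norm]
  unfold pathFun
  set p : EuclideanSpace ℝ (Fin (n+1)) := (q.1 : EuclideanSpace ℝ (Fin (n+1)))
  have hp : ‖p‖ = 1 := mem_sphere_zero_iff_norm.mp q.1.2
  have hJ : ‖J h p‖ = 1 := by rw [norm_J, hp]
  set c := Real.cos (Real.pi * q.2)
  set s := Real.sin (Real.pi * q.2)
  have hi : inner ℝ (c • p) (s • J h p) = (0:ℝ) := by
    rw [real_inner_smul_left, real_inner_smul_right, inner_J h p]; ring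
  have hsq := norm_add_sq_real (c • p) (s • J h p)
  rw [hi] at hsq
  have h1 : ‖c • p‖ = |c| := by rw [norm_smul, hp]; simp
  have h2 : ‖s • J h p‖ = |s| := by rw [norm_smul, hJ]; simp
  have hcs : s ^ 2 + c ^ 2 = 1 := Real.sin_sq_add_cos_sq _
  have hn0 : (0:ℝ) ≤ ‖c • p + s • J h p‖ := norm_nonneg _
  rw [h1, h2] at hsq
  have : ‖c • p + s • J h p‖ ^ 2 = 1 := by
    rw [hsq]; rw [sq_abs, sq_abs]; linarith
  nlinarith

lemma pathFun_cont (h : n % 2 = 1) : Continuous (pathFun (n := n) h) := by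
  unfold pathFun
  have hc1 : Continuous fun q : Metric.sphere (0 : EuclideanSpace ℝ (Fin (n+1))) 1 × I =>
      (q.1 : EuclideanSpace ℝ (Fin (n+1))) := continuous_subtype_val.comp continuous_fst
  have hc2 : Continuous fun q : Metric.sphere (0 : EuclideanSpace ℝ (Fin (n+1))) 1 × I =>
      Real.pi * (q.2 : ℝ) :=
    continuous_const.mul (continuous_subtype_val.comp continuous_snd)
  exact ((Real.continuous_cos.comp hc2).smul hc1).add
    ((Real.continuous_sin.comp hc2).smul ((J_cont h).comp hc1))

end Stmt12

/-- For odd `n ≥ 1`, the evaluation fibration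
`ev₀ : P_a S^n → S^n`, `γ ↦ γ(0)`, admits a continuous section. -/
theorem stmt_12 (n : ℕ) (hn : Odd n) (hn1 : 1 ≤ n) :
    ∃ s : C(Metric.sphere (0 : EuclideanSpace ℝ (Fin (n + 1))) 1,
        {γ : C(I, Metric.sphere (0 : EuclideanSpace ℝ (Fin (n + 1))) 1) // γ 1 = -(γ 0)}),
      ∀ p, (s p).1 0 = p := by
  have h : n % 2 = 1 := Nat.odd_iff.mp hn
  set F : C(Metric.sphere (0 : EuclideanSpace ℝ (Fin (n+1))) 1 × I,
      Metric.sphere (0 : EuclideanSpace ℝ (Fin (n+1))) 1) :=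
    ⟨fun q => ⟨Stmt12.pathFun h q, Stmt12.pathFun_mem h q⟩,
      (Stmt12.pathFun_cont h).subtype_mk _⟩ with hF
  have key0 : ∀ p, (F.curry p) 0 = p := by
    intro p
    apply Subtype.ext
    simp only [hF, ContinuousMap.curry_apply, ContinuousMap.coe_mk, Stmt12.pathFun]
    norm_num
  have key1 : ∀ p, (F.curry p) 1 = -((F.curry p) 0) := by
    intro p
    apply Subtype.ext
    rw [key0 p]
    simp only [hF, ContinuousMap.curry_apply, ContinuousMap.coe_mk, Stmt12.pathFun,
      coe_neg_sphere]
    norm_num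
  exact ⟨⟨fun p => ⟨F.curry p, key1 p⟩, F.curry.continuous.subtype_mk _⟩, key0⟩
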